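/- Let H be a symmetric positive definite real n×n matrix, b ∈ ℝⁿ, and f(x) = ½·xᵀHx − bᵀx. Let u₁, …, u_k ∈ ℝⁿ and let S be their span. If x₁ minimizes f over the affine subspace a₁ + S and x₂ minimizes f over the affine subspace a₂ + S (for some a₁, a₂ ∈ ℝⁿ), then the direction x₂ − x₁ is conjugate to every vector of S, i.e., (x₂ − x₁)ᵀ H u = 0 for all u ∈ S. -/

import Mathlib

open Matrix

lemma aux_quad {α c : ℝ} (hα : 0 ≤ α) (h : ∀ t : ℝ, 0 ≤ α * t^2 + c * t) : c = 0 := by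
  have h2 : (0:ℝ) < 2*α + 1 := by linarith
  have key : α * (-c/(2*α+1))^2 + c * (-c/(2*α+1)) = -(c^2*(α+1)) / (2*α+1)^2 := by
    field_simp; ring
  have h1 := h (-c / (2*α + 1))
  rw [key] at h1
  have h3 : 0 ≤ -(c^2*(α+1)) := by
    by_contra hc
    push_neg at hc
    have := div_neg_of_neg_of_pos hc (by positivity : (0:ℝ) < (2*α+1)^2)
    linarith
  nlinarith [sq_nonneg c]

lemma aux_symm_dot {n : ℕ} {H : Matrix (Fin n) (Fin n) ℝ} (hH : H.IsSymm)
    (x y : Fin n → ℝ) : x ⬝ᵥ H.mulVec y = y ⬝ᵥ H.mulVec x := by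
  rw [dotProduct_mulVec, dotProduct_comm, ← mulVec_transpose, hH.eq]

lemma aux_grad {n : ℕ} {H : Matrix (Fin n) (Fin n) ℝ} (hH : H.IsSymm) (hpd : H.PosDef)
    {b : Fin n → ℝ} {f : (Fin n → ℝ) → ℝ}
    (hf : ∀ x, f x = (1 / 2 : ℝ) * (x ⬝ᵥ H.mulVec x) - b ⬝ᵥ x)
    {S : Submodule ℝ (Fin n → ℝ)} {a x : Fin n → ℝ}
    (hmem : x - a ∈ S) (hmin : ∀ y, y - a ∈ S → f x ≤ f y)
    {v : Fin n → ℝ} (hv : v ∈ S) : x ⬝ᵥ H.mulVec v = b ⬝ᵥ v := by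
  have key : ∀ t : ℝ, 0 ≤ (1/2 * (v ⬝ᵥ H.mulVec v)) * t^2 + (x ⬝ᵥ H.mulVec v - b ⬝ᵥ v) * t := by
    intro t
    have hmem' : (x + t • v) - a ∈ S := by
      have : (x + t • v) - a = (x - a) + t • v := by ring_nf
      rw [this]; exact S.add_mem hmem (S.smul_mem t hv)
    have hle := hmin _ hmem'
    rw [hf, hf] at hle
    have hsym := aux_symm_dot hH x v
    simp only [mulVec_add, mulVec_smul, dotProduct_add, add_dotProduct,
      smul_dotProduct, dotProduct_smul, smul_eq_mul] at hle
    rw [show (x ⬝ᵥ H.mulVec v) = v ⬝ᵥ H.mulVec x from hsym] at hle ⊢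
    ring_nf at hle ⊢
    linarith
  have hα : 0 ≤ (1/2 : ℝ) * (v ⬝ᵥ H.mulVec v) := by
    rcases eq_or_ne v 0 with rfl | hv0
    · simp
    · have := hpd.dotProduct_mulVec_pos hv0
      simp only [star_trivial] at this
      positivity
  have := aux_quad hα key
  linarith

/-- **Parallel subspace property.** If `x₁` minimizes the quadratic
`f(x) = ½ xᵀHx − bᵀx` over the affine subspace `a₁ + S` and `x₂` minimizes `f`
over `a₂ + S`, where `S` is the span of `u₁, …, u_k`, then `x₂ − x₁` is
conjugate (with respect to `H`) to every vector of `S`. -/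
theorem cdos_parallel_subspace_conjugate
    {n : ℕ} (H : Matrix (Fin n) (Fin n) ℝ) (hH : H.IsSymm) (hpd : H.PosDef)
    (b : Fin n → ℝ) (f : (Fin n → ℝ) → ℝ)
    (hf : ∀ x, f x = (1 / 2 : ℝ) * (x ⬝ᵥ H.mulVec x) - b ⬝ᵥ x)
    {k : ℕ} (u : Fin k → (Fin n → ℝ))
    (S : Submodule ℝ (Fin n → ℝ)) (hS : S = Submodule.span ℝ (Set.range u))
    (a₁ a₂ x₁ x₂ : Fin n → ℝ)
    (hx₁mem : x₁ - a₁ ∈ S) (hx₁min : ∀ y, y - a₁ ∈ S → f x₁ ≤ f y)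
    (hx₂mem : x₂ - a₂ ∈ S) (hx₂min : ∀ y, y - a₂ ∈ S → f x₂ ≤ f y) :
    ∀ v ∈ S, (x₂ - x₁) ⬝ᵥ H.mulVec v = 0 := by
  intro v hv
  have h1 := aux_grad hH hpd hf hx₁mem hx₁min hv
  have h2 := aux_grad hH hpd hf hx₂mem hx₂min hv
  rw [sub_dotProduct, h1, h2, sub_self]
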